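/- Let a, b > 0 and λ > 0 with b/a < λ < b²/a². Then v* = (b² − λa²)/((λa − b)·a·b) is strictly positive, and v* is the unique minimizer over v > 0 of the function g(v) = λ(a v − log(1 + a v)) − b v + log(1 + b v). -/

import Mathlib

noncomputable def gf (a b l v : ℝ) : ℝ :=
  l * (a * v - Real.log (1 + a * v)) - b * v + Real.log (1 + b * v)

lemma gf_hasDerivAt (a b l x : ℝ) (h1 : 0 < 1 + a * x) (h2 : 0 < 1 + b * x) :
    HasDerivAt (gf a b l)
      (x * ((l * a ^ 2 - b ^ 2) + a * b * (l * a - b) * x) / ((1 + a * x) * (1 + b * x))) x := by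
  have hA : HasDerivAt (fun v : ℝ => 1 + a * v) a x := by
    simpa using ((hasDerivAt_id x).const_mul a).const_add 1
  have hB : HasDerivAt (fun v : ℝ => 1 + b * v) b x := by
    simpa using ((hasDerivAt_id x).const_mul b).const_add 1
  have hlogA := hA.log h1.ne'
  have hlogB := hB.log h2.ne'
  have h := (((((hasDerivAt_id x).const_mul a).sub hlogA).const_mul l).sub
    ((hasDerivAt_id x).const_mul b)).add hlogB
  refine HasDerivAt.congr_deriv h ?_
  rw [eq_div_iff (mul_ne_zero h1.ne' h2.ne')]
  have e1 : a / (1 + a * x) * (1 + a * x) = a := div_mul_cancel₀ a h1.ne'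
  have e2 : b / (1 + b * x) * (1 + b * x) = b := div_mul_cancel₀ b h2.ne'
  linear_combination (-(l * (1 + b * x))) * e1 + (1 + a * x) * e2

lemma gf_contOn (a b l : ℝ) (ha : 0 < a) (hb : 0 < b) :
    ContinuousOn (gf a b l) (Set.Ici 0) := by
  intro v hv
  have hv0 : (0:ℝ) ≤ v := hv
  have h1 : 0 < 1 + a * v := by nlinarith
  have h2 : 0 < 1 + b * v := by nlinarith
  exact (gf_hasDerivAt a b l v h1 h2).continuousAt.continuousWithinAt

/-- For `b/a < λ < b²/a²`, the variance `v* = (b² − λa²)/((λa − b)ab)` is strictly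
positive and is the unique minimizer over `v > 0` of
`g(v) = λ(av − log(1+av)) − bv + log(1+bv)`. -/
theorem single_attack_optimal_variance (a b l : ℝ) (ha : 0 < a) (hb : 0 < b)
    (hl : 0 < l) (hl₁ : b / a < l) (hl₂ : l < b ^ 2 / a ^ 2) :
    0 < (b ^ 2 - l * a ^ 2) / ((l * a - b) * a * b) ∧
    ∀ v : ℝ, 0 < v → v ≠ (b ^ 2 - l * a ^ 2) / ((l * a - b) * a * b) →
      (l * (a * ((b ^ 2 - l * a ^ 2) / ((l * a - b) * a * b))
          - Real.log (1 + a * ((b ^ 2 - l * a ^ 2) / ((l * a - b) * a * b))))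
        - b * ((b ^ 2 - l * a ^ 2) / ((l * a - b) * a * b))
        + Real.log (1 + b * ((b ^ 2 - l * a ^ 2) / ((l * a - b) * a * b))))
      < (l * (a * v - Real.log (1 + a * v)) - b * v + Real.log (1 + b * v)) := by
  set w : ℝ := (b ^ 2 - l * a ^ 2) / ((l * a - b) * a * b) with hw
  have hba : b < l * a := (div_lt_iff₀ ha).mp hl₁
  have hnum : 0 < b ^ 2 - l * a ^ 2 := by
    have := (lt_div_iff₀ (pow_pos ha 2)).mp hl₂
    linarith
  have hden : 0 < (l * a - b) * a * b :=
    mul_pos (mul_pos (sub_pos.mpr hba) ha) hb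
  have hvpos : 0 < w := div_pos hnum hden
  have hBzero : (l * a ^ 2 - b ^ 2) + a * b * (l * a - b) * w = 0 := by
    have hne : l * a - b ≠ 0 := (sub_pos.mpr hba).ne'
    rw [hw]; field_simp; ring
  -- strict monotonicity on [w, ∞)
  have hmono : StrictMonoOn (gf a b l) (Set.Ici w) := by
    apply strictMonoOn_of_deriv_pos (convex_Ici w)
      ((gf_contOn a b l ha hb).mono (Set.Ici_subset_Ici.mpr hvpos.le))
    intro x hx
    rw [interior_Ici] at hx
    have hx0 : 0 < x := hvpos.trans hx
    have h1 : 0 < 1 + a * x := by nlinarith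
    have h2 : 0 < 1 + b * x := by nlinarith
    rw [(gf_hasDerivAt a b l x h1 h2).deriv]
    have hxw : w < x := hx
    apply div_pos
    · have hp : 0 < a * b * (l * a - b) * (x - w) :=
        mul_pos (mul_pos (mul_pos ha hb) (sub_pos.mpr hba)) (sub_pos.mpr hxw)
      have : 0 < (l * a ^ 2 - b ^ 2) + a * b * (l * a - b) * x := by nlinarith
      positivity
    · positivity
  -- strict antitonicity on [0, w]
  have hanti : StrictAntiOn (gf a b l) (Set.Icc 0 w) := by
    apply strictAntiOn_of_deriv_neg (convex_Icc 0 w)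
      ((gf_contOn a b l ha hb).mono (Set.Icc_subset_Ici_self))
    intro x hx
    rw [interior_Icc] at hx
    obtain ⟨hx0, hxw⟩ := hx
    have h1 : 0 < 1 + a * x := by nlinarith
    have h2 : 0 < 1 + b * x := by nlinarith
    rw [(gf_hasDerivAt a b l x h1 h2).deriv]
    apply div_neg_of_neg_of_pos
    · have hp : 0 < a * b * (l * a - b) * (w - x) :=
        mul_pos (mul_pos (mul_pos ha hb) (sub_pos.mpr hba)) (sub_pos.mpr hxw)
      have hBx : (l * a ^ 2 - b ^ 2) + a * b * (l * a - b) * x < 0 := by nlinarith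
      nlinarith
    · positivity
  refine ⟨hvpos, ?_⟩
  intro v hv0 hne
  show gf a b l w < gf a b l v
  rcases lt_or_gt_of_ne hne with hlt | hgt
  · exact hanti ⟨hv0.le, hlt.le⟩ ⟨hvpos.le, le_refl w⟩ hlt
  · exact hmono (Set.self_mem_Ici) (Set.mem_Ici.mpr hgt.le) hgt
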